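/- Let q : [0,∞) → [0,∞) be a left-continuous function with ∫_0^∞ q(t) dt = 1 (a probability density) such that sup_{x ≥ 0} (x+1)·q(x) < ∞. Then for every P ∈ 𝒱, ∫ x·q(x) dP(x) ≤ 1; that is, the function x ↦ x·q(x) is an e-value for 𝒱, and consequently for every Borel probability measure on ℝ concentrated on [0,∞) whose CDF is concave on [0,∞). -/

import Mathlib

open MeasureTheory Set Filter
open scoped ENNReal NNReal

/-- `𝒰₀⁺`: Borel probability measures on `ℝ` concentrated on `[0,∞)` whose CDF is concave
on `[0,∞)`. -/
def U0plus : Set (Measure ℝ) :=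
  {P | IsProbabilityMeasure P ∧ P (Ici (0 : ℝ)) = 1 ∧
    ConcaveOn ℝ (Ici (0 : ℝ)) (fun x => (P (Iic x)).toReal)}

/-- `𝒱`: Borel probability measures on `ℝ` concentrated on `[0,∞)` satisfying the basic
inequality `P((a,b]) ≤ (b−a)/b` for all `0 ≤ a < b`. -/
def Vclass : Set (Measure ℝ) :=
  {P | IsProbabilityMeasure P ∧ P (Ici (0 : ℝ)) = 1 ∧
    ∀ a b : ℝ, 0 ≤ a → a < b → P (Ioc a b) ≤ ENNReal.ofReal ((b - a) / b)}

/-- Around any point `x > c`, small closed balls have `P`-measure at most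
`c⁻¹` times their volume, for `P` satisfying the `𝒱` interval inequality. -/
lemma vclass_ball_bound (P : Measure ℝ)
    (hV : ∀ a b : ℝ, 0 ≤ a → a < b → P (Ioc a b) ≤ ENNReal.ofReal ((b - a) / b))
    {c x : ℝ} (hc : 0 < c) (hx : c < x) :
    ∀ᶠ r in nhdsWithin (0 : ℝ) (Ioi 0),
      P (Metric.closedBall x r) ≤ (ENNReal.ofReal c⁻¹ • volume) (Metric.closedBall x r) := by
  have hx0 : 0 < x := hc.trans hx
  have hcont : ContinuousAt (fun r : ℝ => x - r - 2 * r * (x + r - c) * c⁻¹) 0 := by fun_prop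
  have h0 : (fun r : ℝ => x - r - 2 * r * (x + r - c) * c⁻¹) 0 = x := by norm_num
  have h1 : ∀ᶠ r in nhds (0 : ℝ), 0 < x - r - 2 * r * (x + r - c) * c⁻¹ := by
    have ht : Tendsto (fun r : ℝ => x - r - 2 * r * (x + r - c) * c⁻¹) (nhds 0) (nhds x) := by
      have := hcont.tendsto
      simpa using this
    exact ht.eventually (eventually_gt_nhds hx0)
  filter_upwards [h1.filter_mono nhdsWithin_le_nhds, self_mem_nhdsWithin] with r ha hr
  have hr0 : 0 < r := hr
  set a := x - r - 2 * r * (x + r - c) * c⁻¹ with hadef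
  set b := x + r with hbdef
  have hrc : 0 < x + r - c := by linarith
  have hpos : 0 < 2 * r * (x + r - c) * c⁻¹ := by positivity
  have hab : a < b := by simp only [hadef, hbdef]; linarith
  have hsub : Metric.closedBall x r ⊆ Ioc a b := by
    rw [Real.closedBall_eq_Icc]
    intro y hy
    exact ⟨lt_of_lt_of_le (by simp only [hadef]; linarith) hy.1, hy.2⟩
  have hb0 : 0 < b := by simp only [hbdef]; linarith
  calc P (Metric.closedBall x r) ≤ P (Ioc a b) := measure_mono hsub
    _ ≤ ENNReal.ofReal ((b - a) / b) := hV a b ha.le hab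
    _ = ENNReal.ofReal (c⁻¹ * (2 * r)) := by
        congr 1
        rw [div_eq_iff hb0.ne']
        simp only [hadef, hbdef]
        field_simp [hc.ne']
        ring
    _ = (ENNReal.ofReal c⁻¹ • volume) (Metric.closedBall x r) := by
        rw [Measure.smul_apply, smul_eq_mul, Real.volume_closedBall,
          ENNReal.ofReal_mul (inv_nonneg.2 hc.le)]

/-- Key covering estimate: any subset of `(c,∞)` has `P`-measure at most `c⁻¹` times its
Lebesgue measure, for `P ∈ 𝒱`. -/
lemma vclass_set_bound (P : Measure ℝ) [IsProbabilityMeasure P]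
    (hV : ∀ a b : ℝ, 0 ≤ a → a < b → P (Ioc a b) ≤ ENNReal.ofReal ((b - a) / b))
    {c : ℝ} (hc : 0 < c) {s : Set ℝ} (hs : s ⊆ Ioi c) :
    P s ≤ ENNReal.ofReal c⁻¹ * volume s := by
  haveI : IsLocallyFiniteMeasure (ENNReal.ofReal c⁻¹ • volume : Measure ℝ) := by
    refine ⟨fun x => ⟨Metric.ball x 1, Metric.ball_mem_nhds x one_pos, ?_⟩⟩
    rw [Measure.smul_apply, smul_eq_mul, Real.volume_ball]
    exact ENNReal.mul_lt_top ENNReal.ofReal_lt_top ENNReal.ofReal_lt_top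
  have h := (Besicovitch.vitaliFamily P).measure_le_of_frequently_le
      (ENNReal.ofReal c⁻¹ • volume) Measure.AbsolutelyContinuous.rfl s
      (fun x hx => (Besicovitch.tendsto_filterAt P x).frequently
        ((vclass_ball_bound P hV hc (hs hx)).frequently))
  simpa [Measure.smul_apply, smul_eq_mul] using h

/-- **the `Xq(X)` e-values, continuous case.** Let `q : [0,∞) → [0,∞)` be
a left-continuous probability density with `(x+1)·q(x)` bounded. Then `x ↦ x·q(x)` is an
e-value for `𝒱`, and consequently for every probability measure on `ℝ` concentrated on
`[0,∞)` with concave CDF on `[0,∞)`. -/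
theorem stmt7 (q : ℝ → ℝ) (hmeas : Measurable q) (hq0 : ∀ x : ℝ, 0 ≤ x → 0 ≤ q x)
    (hlc : ∀ x : ℝ, 0 < x → Tendsto q (nhdsWithin x (Iio x)) (nhds (q x)))
    (hint : ∫ t in Ioi (0 : ℝ), q t = 1)
    (hbdd : ∃ C : ℝ, ∀ x : ℝ, 0 ≤ x → (x + 1) * q x ≤ C) :
    (∀ P ∈ Vclass, ∫⁻ x : ℝ, ENNReal.ofReal (x * q x) ∂P ≤ 1) ∧
    (∀ P ∈ U0plus, ∫⁻ x : ℝ, ENNReal.ofReal (x * q x) ∂P ≤ 1) := by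
  -- `q` is integrable on `(0,∞)` (otherwise its integral would be `0`, not `1`)
  have qint : IntegrableOn q (Ioi 0) := by
    by_contra h
    rw [integral_undef h] at hint
    norm_num at hint
  have hq1 : ∫⁻ t in Ioi (0 : ℝ), ENNReal.ofReal (q t) = 1 := by
    rw [← ofReal_integral_eq_lintegral_ofReal qint
      ((ae_restrict_iff' measurableSet_Ioi).2 (ae_of_all _ fun x hx => hq0 x hx.le)),
      hint, ENNReal.ofReal_one]
  have main : ∀ P ∈ Vclass, ∫⁻ x : ℝ, ENNReal.ofReal (x * q x) ∂P ≤ 1 := by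
    rintro P ⟨hprob, hIci, hV⟩
    haveI := hprob
    set f : ℝ → ℝ≥0∞ := fun x => ENNReal.ofReal (x * q x) with hf
    have hIio : P (Iio 0) = 0 := by
      have hcompl := measure_compl (measurableSet_Ici (a := (0:ℝ))) (measure_ne_top P _)
      rw [hIci, measure_univ, Set.compl_Ici, tsub_self] at hcompl
      exact hcompl
    have hsplit : ∫⁻ x, f x ∂P = ∫⁻ x in Ioi 0, f x ∂P := by
      have hzero : ∫⁻ x in (Ioi (0:ℝ))ᶜ, f x ∂P = 0 := by
        rw [Set.compl_Ioi]
        have hae : ∀ᵐ x ∂(P.restrict (Iic 0)), f x = 0 := by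
          rw [ae_restrict_iff' measurableSet_Iic]
          filter_upwards [measure_eq_zero_iff_ae_notMem.mp hIio] with x hx hxle
          have hx0 : x = 0 := le_antisymm hxle (not_lt.1 hx)
          simp [hf, hx0]
        calc ∫⁻ x in Iic 0, f x ∂P = ∫⁻ _ in Iic (0:ℝ), 0 ∂P := lintegral_congr_ae hae
          _ = 0 := lintegral_zero
      rw [← lintegral_add_compl f measurableSet_Ioi (μ := P), hzero, add_zero]
    rw [hsplit]
    have key : ∀ R : ℝ, 1 < R → ∫⁻ x in Ioi 0, f x ∂P ≤ ENNReal.ofReal R := by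
      intro R hR
      have hR0 : (0:ℝ) < R := lt_trans one_pos hR
      set I : ℤ → Set ℝ := fun k => Ioc (R ^ k) (R ^ (k + 1)) with hI
      have hIm : ∀ k, MeasurableSet (I k) := fun k => measurableSet_Ioc
      have hdisj : Pairwise (Function.onFun Disjoint I) := by
        intro m n hmn
        rcases hmn.lt_or_gt with h | h
        · exact Set.Ioc_disjoint_Ioc.2 (le_trans (min_le_left _ _)
            (le_trans (zpow_le_zpow_right₀ hR.le (by omega)) (le_max_right _ _)))
        · exact Set.Ioc_disjoint_Ioc.2 (le_trans (min_le_right _ _)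
            (le_trans (zpow_le_zpow_right₀ hR.le (by omega)) (le_max_left _ _)))
      have hcover : Ioi (0:ℝ) = ⋃ k, I k := by
        ext x
        simp only [mem_Ioi, mem_iUnion, hI, mem_Ioc]
        constructor
        · intro hx
          obtain ⟨k, hk⟩ := exists_mem_Ioc_zpow hx hR
          exact ⟨k, hk.1, hk.2⟩
        · rintro ⟨k, hk1, _⟩
          exact lt_trans (zpow_pos hR0 k) hk1
      have hpiece : ∀ k : ℤ, ∫⁻ x in I k, f x ∂P
          ≤ ENNReal.ofReal R * ∫⁻ x in I k, ENNReal.ofReal (q x) := by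
        intro k
        have hk0 : (0:ℝ) < R ^ k := zpow_pos hR0 k
        have hk1 : (0:ℝ) < R ^ (k + 1) := zpow_pos hR0 _
        have hmle : P.restrict (I k) ≤ (ENNReal.ofReal (R ^ k)⁻¹ • volume).restrict (I k) := by
          rw [Measure.le_iff]
          intro s hs
          rw [Measure.restrict_apply hs, Measure.restrict_apply hs, Measure.smul_apply,
            smul_eq_mul]
          exact vclass_set_bound P hV hk0 (fun y hy => hy.2.1)
        have hgm : Measurable fun x : ℝ => ENNReal.ofReal (R ^ (k + 1)) * ENNReal.ofReal (q x) :=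
          (measurable_const.mul hmeas.ennreal_ofReal)
        calc ∫⁻ x in I k, f x ∂P
            ≤ ∫⁻ x in I k, f x ∂(ENNReal.ofReal (R ^ k)⁻¹ • volume) :=
              lintegral_mono' hmle le_rfl
          _ = ENNReal.ofReal (R ^ k)⁻¹ * ∫⁻ x in I k, f x ∂volume := by
              rw [Measure.restrict_smul, lintegral_smul_measure, smul_eq_mul]
          _ ≤ ENNReal.ofReal (R ^ k)⁻¹ *
              ∫⁻ x in I k, ENNReal.ofReal (R ^ (k + 1)) * ENNReal.ofReal (q x) ∂volume := by
              refine mul_le_mul_right (setLIntegral_mono hgm fun x hx => ?_) _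
              have hx0 : 0 < x := lt_trans hk0 hx.1
              rw [hf, ← ENNReal.ofReal_mul hk1.le]
              exact ENNReal.ofReal_le_ofReal
                (mul_le_mul_of_nonneg_right hx.2 (hq0 x hx0.le))
          _ = ENNReal.ofReal (R ^ k)⁻¹ * (ENNReal.ofReal (R ^ (k + 1)) *
              ∫⁻ x in I k, ENNReal.ofReal (q x) ∂volume) := by
              rw [lintegral_const_mul _ hmeas.ennreal_ofReal]
          _ = ENNReal.ofReal R * ∫⁻ x in I k, ENNReal.ofReal (q x) ∂volume := by
              rw [← mul_assoc, ← ENNReal.ofReal_mul (inv_nonneg.2 hk0.le)]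
              congr 2
              rw [zpow_add_one₀ hR0.ne' k, inv_mul_cancel_left₀ hk0.ne']
      calc ∫⁻ x in Ioi 0, f x ∂P = ∑' k : ℤ, ∫⁻ x in I k, f x ∂P := by
            rw [hcover, lintegral_iUnion hIm hdisj]
        _ ≤ ∑' k : ℤ, ENNReal.ofReal R * ∫⁻ x in I k, ENNReal.ofReal (q x) ∂volume :=
            ENNReal.tsum_le_tsum hpiece
        _ = ENNReal.ofReal R * ∑' k : ℤ, ∫⁻ x in I k, ENNReal.ofReal (q x) ∂volume :=
            ENNReal.tsum_mul_left
        _ = ENNReal.ofReal R * ∫⁻ x in Ioi 0, ENNReal.ofReal (q x) ∂volume := by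
            rw [hcover, lintegral_iUnion hIm hdisj]
        _ = ENNReal.ofReal R := by rw [hq1, mul_one]
    refine ENNReal.le_of_forall_pos_le_add fun ε hε _ => ?_
    have hcalc := key (1 + (ε : ℝ)) (by
      have : (0:ℝ) < (ε : ℝ) := hε
      linarith)
    calc ∫⁻ x in Ioi 0, f x ∂P ≤ ENNReal.ofReal (1 + (ε : ℝ)) := hcalc
      _ = 1 + (ε : ℝ≥0∞) := by
          rw [ENNReal.ofReal_add zero_le_one ε.coe_nonneg, ENNReal.ofReal_one,
            ENNReal.ofReal_coe_nnreal]
  have hsub : U0plus ⊆ Vclass := by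
    rintro P ⟨hprob, hIci, hconc⟩
    haveI := hprob
    refine ⟨hprob, hIci, fun a b ha hab => ?_⟩
    have hb : 0 < b := lt_of_le_of_lt ha hab
    have hIoc : P (Ioc a b) = P (Iic b) - P (Iic a) := by
      rw [← Set.Iic_sdiff_Iic,
        measure_diff (Set.Iic_subset_Iic.2 hab.le) measurableSet_Iic.nullMeasurableSet
          (measure_ne_top P _)]
    set F := fun x => (P (Iic x)).toReal with hFdef
    have hF0 : 0 ≤ F 0 := ENNReal.toReal_nonneg
    have hFa : 0 ≤ F a := ENNReal.toReal_nonneg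
    have hFb1 : F b ≤ 1 := by
      have h1 : P (Iic b) ≤ 1 := prob_le_one
      calc F b ≤ (1 : ℝ≥0∞).toReal := ENNReal.toReal_mono ENNReal.one_ne_top h1
        _ = 1 := ENNReal.toReal_one
    have hcoef1 : 0 ≤ 1 - a / b := by
      have : a / b ≤ 1 := (div_le_one hb).2 hab.le
      linarith
    have hcoef2 : 0 ≤ a / b := div_nonneg ha hb.le
    have hconc2 : a / b * F b ≤ F a := by
      have h := hconc.2 (mem_Ici.2 le_rfl) (mem_Ici.2 hb.le) hcoef1 hcoef2 (by ring)
      simp only [smul_eq_mul, mul_zero, zero_add] at h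
      rw [div_mul_cancel₀ a hb.ne'] at h
      nlinarith [mul_nonneg hcoef1 hF0]
    rw [hIoc, tsub_le_iff_right, ← ENNReal.ofReal_toReal (measure_ne_top P (Iic b)),
      ← ENNReal.ofReal_toReal (measure_ne_top P (Iic a)),
      ← ENNReal.ofReal_add (div_nonneg (by linarith) hb.le) ENNReal.toReal_nonneg]
    apply ENNReal.ofReal_le_ofReal
    have hstep : F b - F a ≤ F b * ((b - a) / b) := by
      have heq : F b * ((b - a) / b) = F b - F b * (a / b) := by
        field_simp
      rw [heq]
      linarith [hconc2]
    have hstep2 : F b * ((b - a) / b) ≤ (b - a) / b := by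
      have hdnn : 0 ≤ (b - a) / b := div_nonneg (by linarith) hb.le
      nlinarith
    show F b ≤ (b - a) / b + F a
    linarith
  exact ⟨main, fun P hP => main P (hsub hP)⟩
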